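/- arXiv:1910.12110 — 12 statements merged into one kernel-verified Lean document; each statement's English description precedes it below -/
import Mathlib

section
/- If G is a 2-self-centered graph and G is edge-maximal among 2-self-centered graphs (i.e., adding any edge between non-adjacent vertices destroys the 2-self-centered property), then every connected component of the complement of G is a tree with at least two vertices. -/
open SimpleGraph

variable {V : Type*}

/-- Eccentricity of a vertex: maximum distance to any vertex. -/
noncomputable def ecc (G : SimpleGraph V) [Fintype V] (v : V) : ℕ :=
  Finset.univ.sup fun u => G.dist v u

/-- Diameter: maximum eccentricity. -/
noncomputable def gdiam (G : SimpleGraph V) [Fintype V] : ℕ :=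
  Finset.univ.sup fun v => ecc G v

/-- Radius: minimum eccentricity. -/
noncomputable def grad (G : SimpleGraph V) [Fintype V] : ℕ :=
  sInf (Set.range fun v => ecc G v)

/-- A graph is 2-self-centered if it is connected and diam = rad = 2. -/
def TwoSC (G : SimpleGraph V) [Fintype V] : Prop :=
  G.Connected ∧ gdiam G = 2 ∧ grad G = 2

lemma aux_two_le_ecc [Fintype V] {G : SimpleGraph V} (h : grad G = 2) (v : V) :
    2 ≤ ecc G v := by
  have := Nat.sInf_le (Set.mem_range_self (f := fun v => ecc G v) v)
  rw [grad] at h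
  omega

lemma aux_exists_far [Fintype V] {G : SimpleGraph V} (h : grad G = 2) (v : V) :
    ∃ u, ¬ G.Adj v u ∧ v ≠ u := by
  by_contra hc
  push_neg at hc
  have h2 := aux_two_le_ecc h v
  have : ecc G v ≤ 1 := by
    apply Finset.sup_le
    intro u _
    by_cases hvu : v = u
    · subst hvu; simp [SimpleGraph.dist_self]
    · rcases Classical.em (G.Adj v u) with ha | ha
      · exact le_of_eq (SimpleGraph.dist_eq_one_iff_adj.mpr ha)
      · exact absurd (hc u ha) hvu
  omega

/-- Key structural consequence of edge-maximality. -/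
lemma aux_key [Fintype V] {G : SimpleGraph V}
    (h2sc : TwoSC G)
    (hmax : ∀ u v : V, u ≠ v → ¬ G.Adj u v →
      ¬ TwoSC (G ⊔ SimpleGraph.fromEdgeSet {s(u, v)})) :
    ∀ a b : V, Gᶜ.Adj a b →
      (∀ c, Gᶜ.Adj a c → c = b) ∨ (∀ c, Gᶜ.Adj b c → c = a) := by
  classical
  obtain ⟨hconn, hdiam, hrad⟩ := h2sc
  intro a b hab
  rw [compl_adj] at hab
  obtain ⟨hne, hnadj⟩ := hab
  set G' := G ⊔ SimpleGraph.fromEdgeSet {s(a, b)} with hG'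
  have hle : G ≤ G' := le_sup_left
  have hconn' : G'.Connected := hconn.mono hle
  have hdist' : ∀ u v : V, G'.dist u v ≤ G.dist u v := by
    intro u v
    obtain ⟨p, hp⟩ := (hconn.preconnected u v).exists_walk_length_eq_dist
    calc G'.dist u v ≤ (p.map (SimpleGraph.Hom.ofLE hle)).length :=
          SimpleGraph.dist_le _
      _ = p.length := SimpleGraph.Walk.length_map _ _
      _ = G.dist u v := hp
  have hecc' : ∀ v, ecc G' v ≤ ecc G v := by
    intro v
    apply Finset.sup_le
    intro u _
    exact (hdist' v u).trans (Finset.le_sup (Finset.mem_univ u))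
  have hV : Nonempty V := hconn.nonempty
  have hnot := hmax a b hne hnadj
  -- some vertex has eccentricity ≤ 1 in G'
  have hgd2 : gdiam G' ≤ 2 := by
    apply Finset.sup_le
    intro v _
    calc ecc G' v ≤ ecc G v := hecc' v
      _ ≤ gdiam G := Finset.le_sup (Finset.mem_univ v)
      _ = 2 := hdiam
  have hgr2 : grad G' ≤ 2 := by
    obtain ⟨v⟩ := hV
    calc grad G' ≤ ecc G' v := Nat.sInf_le ⟨v, rfl⟩
      _ ≤ ecc G v := hecc' v
      _ ≤ gdiam G := Finset.le_sup (Finset.mem_univ v)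
      _ = 2 := hdiam
  have hggd : grad G' ≤ gdiam G' := by
    obtain ⟨v⟩ := hV
    calc grad G' ≤ ecc G' v := Nat.sInf_le ⟨v, rfl⟩
      _ ≤ gdiam G' := Finset.le_sup (Finset.mem_univ v)
  have hor : gdiam G' ≠ 2 ∨ grad G' ≠ 2 :=
    not_and_or.mp (fun hh => hnot ⟨hconn', hh⟩)
  have hgr1 : grad G' ≤ 1 := by omega
  obtain ⟨w, hw⟩ : ∃ w, ecc G' w = grad G' := by
    have hne' : (Set.range fun v => ecc G' v).Nonempty := Set.range_nonempty _
    exact Nat.sInf_mem hne'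
  have hecw : ecc G' w ≤ 1 := by rw [hw]; exact hgr1
  have hadjall : ∀ z, w ≠ z → G'.Adj w z := by
    intro z hz
    have hd : G'.dist w z ≤ 1 :=
      (Finset.le_sup (Finset.mem_univ z)).trans hecw
    have hpos := hconn'.pos_dist_of_ne hz
    exact SimpleGraph.dist_eq_one_iff_adj.mp (le_antisymm hd hpos)
  -- find a vertex far from w in G
  obtain ⟨z₀, hz₀⟩ : ∃ z₀, 2 ≤ G.dist w z₀ := by
    by_contra hc
    push_neg at hc
    have : ecc G w ≤ 1 := Finset.sup_le fun u _ => by have := hc u; omega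
    have := aux_two_le_ecc hrad w
    omega
  have hwz : w ≠ z₀ := by
    intro h; rw [h, SimpleGraph.dist_self] at hz₀; omega
  have hnadj₀ : ¬ G.Adj w z₀ := by
    intro h
    rw [← SimpleGraph.dist_eq_one_iff_adj] at h
    omega
  have hadj' := hadjall z₀ hwz
  rw [hG', sup_adj, fromEdgeSet_adj] at hadj'
  rcases hadj' with h | ⟨hmem, _⟩
  · exact absurd h hnadj₀
  rw [Set.mem_singleton_iff, Sym2.eq_iff] at hmem
  -- common step: any Gᶜ-neighbor c of w satisfies s(w,c) = s(a,b)
  have hstep : ∀ c, Gᶜ.Adj w c → (w = a ∧ c = b) ∨ (w = b ∧ c = a) := by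
    intro c hc
    rw [compl_adj] at hc
    have hadjc := hadjall c hc.1
    rw [hG', sup_adj, fromEdgeSet_adj] at hadjc
    rcases hadjc with h | ⟨hmem', _⟩
    · exact absurd h hc.2
    rw [Set.mem_singleton_iff, Sym2.eq_iff] at hmem'
    exact hmem'
  rcases hmem with ⟨hwa, _⟩ | ⟨hwb, _⟩
  · left
    intro c hc
    subst hwa
    rcases hstep c hc with ⟨_, hcb⟩ | ⟨hwb2, _⟩
    · exact hcb
    · exact absurd hwb2 hne
  · right
    intro c hc
    subst hwb
    rcases hstep c hc with ⟨hba, _⟩ | ⟨_, hca⟩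
    · exact absurd hba.symm hne
    · exact hca

/-- A graph in which every edge has an endpoint of degree one is acyclic. -/
lemma aux_acyclic {H : SimpleGraph V}
    (hk : ∀ a b : V, H.Adj a b →
      (∀ c, H.Adj a c → c = b) ∨ (∀ c, H.Adj b c → c = a)) :
    H.IsAcyclic := by
  intro v p hp
  obtain ⟨b, h, q, rfl⟩ := SimpleGraph.Walk.not_nil_iff.mp hp.not_nil
  · have hvb : v ≠ b := h.ne
    rcases hk _ _ h with h1 | h2
    · -- v's unique neighbor is b; look at the last edge of the cycle
      obtain ⟨c, hvc, q', hq⟩ := SimpleGraph.Walk.exists_eq_cons_of_ne hvb q.reverse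
      have hcb : c = b := h1 c hvc
      have hmem : s(v, c) ∈ q.edges := by
        have hmem' : s(v, c) ∈ q.reverse.edges := by
          rw [hq, SimpleGraph.Walk.edges_cons]
          exact List.mem_cons_self
        rwa [SimpleGraph.Walk.edges_reverse, List.mem_reverse] at hmem'
      have hnd := hp.edges_nodup
      rw [SimpleGraph.Walk.edges_cons, List.nodup_cons] at hnd
      rw [hcb] at hmem
      exact hnd.1 hmem
    · -- b's unique neighbor is v; look at the second edge
      obtain ⟨d, hbd, q2, hq⟩ := SimpleGraph.Walk.exists_eq_cons_of_ne hvb.symm q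
      have hdv : d = v := h2 d hbd
      subst hdv
      have hnd := hp.edges_nodup
      rw [hq, SimpleGraph.Walk.edges_cons, SimpleGraph.Walk.edges_cons,
        List.nodup_cons] at hnd
      exact hnd.1 (by rw [Sym2.eq_swap]; exact List.mem_cons_self)

/-- Walks with support in a set lift to reachability in the induced graph. -/
lemma aux_walk_induce {H : SimpleGraph V} {s : Set V} {a b : V}
    (p : H.Walk a b) (hs : ∀ x ∈ p.support, x ∈ s) :
    (H.induce s).Reachable ⟨a, hs a p.start_mem_support⟩ ⟨b, hs b p.end_mem_support⟩ := by
  induction p with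
  | nil => exact SimpleGraph.Reachable.refl _
  | @cons u x w h q ih =>
    have hx : x ∈ s := hs x (List.mem_cons_of_mem _ q.start_mem_support)
    have hq : ∀ y ∈ q.support, y ∈ s := fun y hy =>
      hs y (List.mem_cons_of_mem _ hy)
    have hadj : (H.induce s).Adj ⟨u, hs u (SimpleGraph.Walk.start_mem_support _)⟩ ⟨x, hx⟩ := h
    exact hadj.reachable.trans (ih hq)

/-- If G is edge-maximal 2-self-centered, then every connected component of the complement
is a tree with at least two vertices. -/
theorem stmt_3 [Fintype V] (G : SimpleGraph V)
    (h2sc : TwoSC G)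
    (hmax : ∀ u v : V, u ≠ v → ¬ G.Adj u v →
      ¬ TwoSC (G ⊔ SimpleGraph.fromEdgeSet {s(u, v)})) :
    ∀ C : Gᶜ.ConnectedComponent,
      (Gᶜ.induce C.supp).IsTree ∧ 2 ≤ C.supp.ncard := by
  classical
  have hkey := aux_key h2sc hmax
  have hrad := h2sc.2.2
  intro C
  have hacyc : Gᶜ.IsAcyclic := aux_acyclic hkey
  refine ⟨⟨?_, ?_⟩, ?_⟩
  · -- connected
    rw [connected_iff]
    constructor
    · rintro ⟨x, hx⟩ ⟨y, hy⟩
      have hr : Gᶜ.Reachable x y := by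
        rw [ConnectedComponent.mem_supp_iff] at hx hy
        exact SimpleGraph.ConnectedComponent.exact (hx.trans hy.symm)
      obtain ⟨p⟩ := hr
      have hsupp : ∀ z ∈ p.support, z ∈ C.supp := by
        intro z hz
        rw [ConnectedComponent.mem_supp_iff] at hx ⊢
        rw [← hx]
        exact SimpleGraph.ConnectedComponent.sound ⟨(p.takeUntil z hz).reverse⟩
      exact aux_walk_induce p hsupp
    · obtain ⟨v, hv⟩ := C.exists_rep
      exact ⟨⟨v, by rw [ConnectedComponent.mem_supp_iff]; exact hv⟩⟩
  · -- acyclic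
    intro v p hp
    exact hacyc _ (hp.map (f := (SimpleGraph.Embedding.induce (G := Gᶜ) C.supp).toHom)
      Subtype.val_injective)
  · -- at least two vertices
    obtain ⟨v, hv⟩ := C.exists_rep
    obtain ⟨u, hnadj, hne⟩ := aux_exists_far hrad v
    have hvC : v ∈ C.supp := by rw [ConnectedComponent.mem_supp_iff]; exact hv
    have huC : u ∈ C.supp := by
      rw [ConnectedComponent.mem_supp_iff, ← hv]
      exact SimpleGraph.ConnectedComponent.sound
        (((compl_adj G v u).mpr ⟨hne, hnadj⟩).reachable).symm
    have : 1 < C.supp.ncard :=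
      (Set.one_lt_ncard (Set.toFinite _)).mpr ⟨v, hvC, u, huC, hne⟩
    omega
end

section
/- A 2-self-centered graph G is edge-maximal (adding any edge between non-adjacent vertices destroys the property of being 2-self-centered) if and only if the complement of G is disconnected and each of its connected components is a star with at least two vertices. -/
open SimpleGraph

variable {V : Type*}

lemma twoSC_iff [Fintype V] (G : SimpleGraph V) :
    TwoSC G ↔ G.Connected ∧ ∀ v, ecc G v = 2 := by
  constructor
  · rintro ⟨hc, hd, hr⟩
    refine ⟨hc, fun v => le_antisymm ?_ ?_⟩
    · rw [← hd]; exact Finset.le_sup (Finset.mem_univ v)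
    · rw [← hr]; exact Nat.sInf_le ⟨v, rfl⟩
  · rintro ⟨hc, he⟩
    have hne : Nonempty V := hc.nonempty
    refine ⟨hc, ?_, ?_⟩
    · unfold gdiam
      rw [show (fun v => ecc G v) = fun _ => 2 from funext he]
      exact Finset.sup_const Finset.univ_nonempty 2
    · unfold grad
      rw [show (fun v => ecc G v) = fun _ => 2 from funext he]
      rw [Set.range_const]
      exact csInf_singleton 2

lemma dist_le_two_of_ecc [Fintype V] {G : SimpleGraph V} {v : V} (h : ecc G v = 2)
    (u : V) : G.dist v u ≤ 2 := h ▸ Finset.le_sup (Finset.mem_univ u)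

lemma two_le_dist_of [Fintype V] {G : SimpleGraph V} {u v : V} (hr : G.Reachable u v)
    (hne : u ≠ v) (hnadj : ¬ G.Adj u v) : 2 ≤ G.dist u v := by
  have h0 : G.dist u v ≠ 0 := dist_ne_zero_iff_ne_and_reachable.mpr ⟨hne, hr⟩
  have h1 : G.dist u v ≠ 1 := fun h => hnadj (dist_eq_one_iff_adj.mp h)
  omega

lemma newAdj (G : SimpleGraph V) (u v a b : V) :
    (G ⊔ SimpleGraph.fromEdgeSet {s(u, v)}).Adj a b ↔
      G.Adj a b ∨ ((a = u ∧ b = v ∨ a = v ∧ b = u) ∧ a ≠ b) := by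
  simp [Sym2.eq_iff]

lemma dist_le_dist_of_le {G G' : SimpleGraph V} (h : G ≤ G') {u v : V}
    (hr : G.Reachable u v) : G'.dist u v ≤ G.dist u v := by
  obtain ⟨p, hp⟩ := hr.exists_walk_length_eq_dist
  calc G'.dist u v ≤ (p.mapLe h).length := dist_le _
  _ = p.length := by simp
  _ = G.dist u v := hp

lemma not_twoSC_of_dominating [Fintype V] {G' : SimpleGraph V} {u : V}
    (hdom : ∀ x, x ≠ u → G'.Adj u x) : ¬ TwoSC G' := by
  intro hT
  have he := ((twoSC_iff G').mp hT).2 u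
  have hle : ecc G' u ≤ 1 := by
    apply Finset.sup_le
    intro x _
    by_cases hx : x = u
    · subst hx
      rw [SimpleGraph.dist_self]
      omega
    · exact le_of_eq (dist_eq_one_iff_adj.mpr (hdom x hx))
  omega

lemma star_closure {G : SimpleGraph V}
    (hP : ∀ u v, Gᶜ.Adj u v → (∀ w, Gᶜ.Adj u w → w = v) ∨ (∀ w, Gᶜ.Adj v w → w = u))
    {u₀ v₀ : V} (hu₀ : Gᶜ.Adj u₀ v₀) (hleaf : ∀ w, Gᶜ.Adj u₀ w → w = v₀) :
    ∀ x ∈ (Gᶜ.connectedComponentMk v₀).supp,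
      x = v₀ ∨ (Gᶜ.Adj v₀ x ∧ ∀ w, Gᶜ.Adj x w → w = v₀) := by
  have step : ∀ x y : V, (x = v₀ ∨ (Gᶜ.Adj v₀ x ∧ ∀ w, Gᶜ.Adj x w → w = v₀)) →
      Gᶜ.Adj x y → (y = v₀ ∨ (Gᶜ.Adj v₀ y ∧ ∀ w, Gᶜ.Adj y w → w = v₀)) := by
    intro x y hx hxy
    rcases hx with rfl | ⟨hadj, honly⟩
    · right
      refine ⟨hxy, ?_⟩
      rcases hP x y hxy with h | h
      · have h2 : u₀ = y := h u₀ hu₀.symm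
        exact h2 ▸ hleaf
      · exact h
    · left; exact honly y hxy
  have key : ∀ (x y : V) (_ : Gᶜ.Walk x y),
      (x = v₀ ∨ (Gᶜ.Adj v₀ x ∧ ∀ w, Gᶜ.Adj x w → w = v₀)) →
      (y = v₀ ∨ (Gᶜ.Adj v₀ y ∧ ∀ w, Gᶜ.Adj y w → w = v₀)) := by
    intro x y p
    induction p with
    | nil => exact id
    | cons ha q ih => intro hx; exact ih (step _ _ hx ha)
  intro x hx
  have hr : Gᶜ.Reachable v₀ x := (SimpleGraph.ConnectedComponent.eq.mp hx).symm
  obtain ⟨p⟩ := hr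
  exact key v₀ x p (Or.inl rfl)

lemma star_iso [Fintype V] {G : SimpleGraph V} {v₀ : V} (S : Set V)
    (hv₀ : v₀ ∈ S)
    (hmem : ∀ x, x ∈ S ↔ x = v₀ ∨ Gᶜ.Adj v₀ x)
    (honly : ∀ x, Gᶜ.Adj v₀ x → ∀ w, Gᶜ.Adj x w → w = v₀)
    (hn : ∃ x, Gᶜ.Adj v₀ x) :
    ∃ k : ℕ, 1 ≤ k ∧ Nonempty ((Gᶜ.induce S) ≃g completeBipartiteGraph (Fin 1) (Fin k)) := by
  classical
  obtain ⟨x₁, hx₁⟩ := hn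
  have hN : Nonempty {x // Gᶜ.Adj v₀ x} := ⟨⟨x₁, hx₁⟩⟩
  have hk : 1 ≤ Fintype.card {x // Gᶜ.Adj v₀ x} := Fintype.card_pos
  set k := Fintype.card {x // Gᶜ.Adj v₀ x} with hkdef
  let e₂ : {x // Gᶜ.Adj v₀ x} ≃ Fin k := Fintype.equivFin _
  have hne' : ∀ (j : Fin k), ((e₂.symm j : {x // Gᶜ.Adj v₀ x}) : V) ≠ v₀ :=
    fun j => (e₂.symm j).2.ne'
  let f : ↥S ≃ (Fin 1 ⊕ Fin k) :=
  { toFun := fun x => if h : (x : V) = v₀ then Sum.inl 0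
      else Sum.inr (e₂ ⟨x, ((hmem x).mp x.2).resolve_left h⟩)
    invFun := Sum.elim (fun _ => ⟨v₀, hv₀⟩)
      (fun j => ⟨((e₂.symm j : {x // Gᶜ.Adj v₀ x}) : V), (hmem _).mpr (Or.inr (e₂.symm j).2)⟩)
    left_inv := by
      rintro ⟨x, hx⟩
      by_cases h : x = v₀
      · simp only [dif_pos h, Sum.elim_inl]
        exact Subtype.ext h.symm
      · simp only [dif_neg h, Sum.elim_inr]
        apply Subtype.ext
        show ((e₂.symm (e₂ _) : {x // Gᶜ.Adj v₀ x}) : V) = x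
        rw [Equiv.symm_apply_apply]
    right_inv := by
      rintro (i | j)
      · simp only [Sum.elim_inl, dif_pos]
        simp [Subsingleton.elim (α := Fin 1) i 0]
      · simp only [Sum.elim_inr, dif_neg (hne' j)]
        simp [hne' j] }
  refine ⟨k, hk, ⟨⟨f, ?_⟩⟩⟩
  rintro ⟨a, ha⟩ ⟨b, hb⟩
  show (completeBipartiteGraph _ _).Adj (f _) (f _) ↔ (Gᶜ.induce S).Adj _ _
  have hrhs : (Gᶜ.induce S).Adj ⟨a, ha⟩ ⟨b, hb⟩ ↔ Gᶜ.Adj a b := by simp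
  rw [hrhs]
  by_cases h1 : a = v₀ <;> by_cases h2 : b = v₀
  · subst h1; subst h2
    simp [f]
  · apply iff_of_true
    · simp [f, dif_pos h1, dif_neg h2]
    · subst h1; exact ((hmem b).mp hb).resolve_left h2
  · apply iff_of_true
    · simp [f, dif_neg h1, dif_pos h2]
    · subst h2; exact (((hmem a).mp ha).resolve_left h1).symm
  · apply iff_of_false
    · simp [f, dif_neg h1, dif_neg h2]
    · intro hab
      exact h2 (honly a (((hmem a).mp ha).resolve_left h1) b hab)

/-- A 2-self-centered graph is edge-maximal iff its complement is disconnected and each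
connected component of the complement is a star K_{1,k} with k ≥ 1. -/
theorem stmt_4 [Fintype V] (G : SimpleGraph V) (h2sc : TwoSC G) :
    (∀ u v : V, u ≠ v → ¬ G.Adj u v →
        ¬ TwoSC (G ⊔ SimpleGraph.fromEdgeSet {s(u, v)})) ↔
      (¬ Gᶜ.Connected ∧ ∀ C : Gᶜ.ConnectedComponent, ∃ k : ℕ, 1 ≤ k ∧
        Nonempty ((Gᶜ.induce C.supp) ≃g completeBipartiteGraph (Fin 1) (Fin k))) := by
  obtain ⟨hconn, hecc⟩ := (twoSC_iff G).mp h2sc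
  have hnev : Nonempty V := hconn.nonempty
  have hub : ∀ v u, G.dist v u ≤ 2 := fun v u => dist_le_two_of_ecc (hecc v) u
  have hnbr : ∀ v : V, ∃ u, Gᶜ.Adj v u := by
    intro v
    obtain ⟨u, -, hu⟩ := Finset.exists_mem_eq_sup Finset.univ
      Finset.univ_nonempty (fun u => G.dist v u)
    have hd : G.dist v u = 2 := by rw [← hu]; exact hecc v
    have h0 : G.dist v u ≠ 0 := by omega
    have hne : v ≠ u := (dist_ne_zero_iff_ne_and_reachable.mp h0).1
    refine ⟨u, (G.compl_adj v u).mpr ⟨hne, fun h => ?_⟩⟩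
    have := dist_eq_one_iff_adj.mpr h
    omega
  constructor
  · -- edge-maximal → complement structure
    intro hmax
    have hP : ∀ u v, Gᶜ.Adj u v →
        (∀ w, Gᶜ.Adj u w → w = v) ∨ (∀ w, Gᶜ.Adj v w → w = u) := by
      intro u v huv
      obtain ⟨hne, hnadj⟩ := (G.compl_adj u v).mp huv
      by_contra hcon
      push_neg at hcon
      obtain ⟨⟨w₁, hw₁, hw₁v⟩, ⟨w₂, hw₂, hw₂u⟩⟩ := hcon
      apply hmax u v hne hnadj
      set G' := G ⊔ SimpleGraph.fromEdgeSet {s(u, v)} with hG'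
      have hle : G ≤ G' := le_sup_left
      have hconn' : G'.Connected := hconn.mono hle
      rw [twoSC_iff]
      refine ⟨hconn', fun w => le_antisymm ?_ ?_⟩
      · apply Finset.sup_le
        intro x _
        calc G'.dist w x ≤ G.dist w x := dist_le_dist_of_le hle (hconn.preconnected w x)
        _ ≤ 2 := hub w x
      · obtain ⟨x, hwx, hne2⟩ : ∃ x, ¬ G'.Adj w x ∧ w ≠ x := by
          obtain ⟨x₀, hx₀⟩ := hnbr w
          obtain ⟨hne0, hnadj0⟩ := (G.compl_adj w x₀).mp hx₀
          by_cases hG'a : G'.Adj w x₀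
          · rcases (newAdj G u v w x₀).mp hG'a with h | ⟨h, -⟩
            · exact absurd h hnadj0
            rcases h with ⟨rfl, rfl⟩ | ⟨rfl, rfl⟩
            · refine ⟨w₁, fun hadj' => ?_, ((G.compl_adj w w₁).mp hw₁).1⟩
              rcases (newAdj G w x₀ w w₁).mp hadj' with h' | ⟨h', -⟩
              · exact ((G.compl_adj w w₁).mp hw₁).2 h'
              · rcases h' with ⟨-, rfl⟩ | ⟨rfl, -⟩
                · exact hw₁v rfl
                · exact hne rfl
            · refine ⟨w₂, fun hadj' => ?_, ((G.compl_adj w w₂).mp hw₂).1⟩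
              rcases (newAdj G x₀ w w w₂).mp hadj' with h' | ⟨h', -⟩
              · exact ((G.compl_adj w w₂).mp hw₂).2 h'
              · rcases h' with ⟨rfl, -⟩ | ⟨-, rfl⟩
                · exact hne rfl
                · exact hw₂u rfl
          · exact ⟨x₀, hG'a, hne0⟩
        calc 2 ≤ G'.dist w x := two_le_dist_of (hconn'.preconnected w x) hne2 hwx
        _ ≤ _ := Finset.le_sup (Finset.mem_univ x)
    have pair : ∀ a b : V, Gᶜ.Adj a b → ∃ u₀ v₀ : V, Gᶜ.Adj u₀ v₀ ∧
        (∀ w, Gᶜ.Adj u₀ w → w = v₀) ∧ Gᶜ.Reachable v₀ a := by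
      intro a b hab
      rcases hP a b hab with h | h
      · exact ⟨a, b, hab, h, hab.reachable.symm⟩
      · exact ⟨b, a, hab.symm, h, Reachable.refl a⟩
    constructor
    · -- complement disconnected
      intro hc
      obtain ⟨v⟩ := hnev
      obtain ⟨y, hy⟩ := hnbr v
      obtain ⟨u₀, v₀, hu₀, hleaf, -⟩ := pair v y hy
      have hdom : ∀ x, x ≠ v₀ → Gᶜ.Adj v₀ x := by
        intro x hx
        have hmemx : x ∈ (Gᶜ.connectedComponentMk v₀).supp :=
          ConnectedComponent.eq.mpr (hc.preconnected x v₀)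
        rcases star_closure hP hu₀ hleaf x hmemx with rfl | ⟨h, -⟩
        · exact absurd rfl hx
        · exact h
      have hiso : ∀ x, ¬ G.Adj v₀ x := by
        intro x hax
        rcases eq_or_ne x v₀ with rfl | hx
        · exact Gᶜ.irrefl ((G.compl_adj x x).mpr ⟨hax.ne', (G.irrefl · )⟩)
        · exact ((G.compl_adj v₀ x).mp (hdom x hx)).2 hax
      have hne : u₀ ≠ v₀ := hu₀.ne
      obtain ⟨p⟩ := hconn.preconnected v₀ u₀
      cases p with
      | nil => exact hne rfl
      | cons ha q => exact hiso _ ha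
    · -- each component is a star
      intro C
      obtain ⟨x₀, hx₀⟩ := C.exists_rep
      obtain ⟨y, hy⟩ := hnbr x₀
      obtain ⟨u₀, v₀, hu₀, hleaf, hreach⟩ := pair x₀ y hy
      have hC0 : C = Gᶜ.connectedComponentMk v₀ := by
        rw [← hx₀]
        exact ConnectedComponent.eq.mpr hreach.symm
      rw [hC0]
      apply star_iso
      · exact (ConnectedComponent.mem_supp_iff _ _).mpr rfl
      · intro x
        constructor
        · intro hx
          rcases star_closure hP hu₀ hleaf x hx with h | ⟨h, -⟩
          · exact Or.inl h
          · exact Or.inr h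
        · rintro (rfl | h)
          · exact (ConnectedComponent.mem_supp_iff _ _).mpr rfl
          · exact ConnectedComponent.eq.mpr h.reachable.symm
      · intro x hx w hw
        have hx' : x ∈ (Gᶜ.connectedComponentMk v₀).supp :=
          ConnectedComponent.eq.mpr hx.reachable.symm
        rcases star_closure hP hu₀ hleaf x hx' with rfl | ⟨-, h⟩
        · exact absurd hx (Gᶜ.irrefl)
        · exact h w hw
      · exact ⟨u₀, hu₀.symm⟩
  · -- complement structure → edge-maximal
    rintro ⟨-, hstar⟩ u v hne hnadj
    have huv : Gᶜ.Adj u v := (G.compl_adj u v).mpr ⟨hne, hnadj⟩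
    set C := Gᶜ.connectedComponentMk u with hC
    obtain ⟨k, hk, ⟨φ⟩⟩ := hstar C
    have hu : u ∈ C.supp := (ConnectedComponent.mem_supp_iff _ _).mpr rfl
    have hv : v ∈ C.supp := ConnectedComponent.eq.mpr huv.reachable.symm
    set a : ↥C.supp := ⟨u, hu⟩ with ha
    set b : ↥C.supp := ⟨v, hv⟩ with hb
    have hab : (completeBipartiteGraph (Fin 1) (Fin k)).Adj (φ a) (φ b) :=
      φ.map_rel_iff.mpr huv
    have key : ∀ (x y : ↥C.supp), Gᶜ.Adj ↑x ↑y → (φ x).isRight →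
        ∀ w, Gᶜ.Adj ↑x w → w = ↑y := by
      intro x y hxy hright w hw
      have hwC : w ∈ C.supp := by
        have h' : Gᶜ.connectedComponentMk w = Gᶜ.connectedComponentMk ↑x :=
          ConnectedComponent.eq.mpr hw.reachable.symm
        have := x.2
        rw [ConnectedComponent.mem_supp_iff] at this ⊢
        rw [h', this]
      have h1 : (completeBipartiteGraph (Fin 1) (Fin k)).Adj (φ x) (φ ⟨w, hwC⟩) :=
        φ.map_rel_iff.mpr hw
      have h2 : (completeBipartiteGraph (Fin 1) (Fin k)).Adj (φ x) (φ y) :=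
        φ.map_rel_iff.mpr hxy
      have hLw : (φ ⟨w, hwC⟩).isLeft := by
        rcases h1 with ⟨hl, -⟩ | ⟨-, hl⟩
        · rw [Sum.isLeft_iff] at hl
          obtain ⟨z, hz⟩ := hl
          rw [hz] at hright
          simp at hright
        · exact hl
      have hLy : (φ y).isLeft := by
        rcases h2 with ⟨hl, -⟩ | ⟨-, hl⟩
        · rw [Sum.isLeft_iff] at hl
          obtain ⟨z, hz⟩ := hl
          rw [hz] at hright
          simp at hright
        · exact hl
      rw [Sum.isLeft_iff] at hLw hLy
      obtain ⟨i, hi⟩ := hLw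
      obtain ⟨i', hi'⟩ := hLy
      have : φ ⟨w, hwC⟩ = φ y := by
        rw [hi, hi']
        congr 1
        exact Subsingleton.elim _ _
      have := φ.toEquiv.injective this
      exact congrArg Subtype.val this
    rcases hab with ⟨-, hr⟩ | ⟨hr, -⟩
    · -- φ b is right: v is a leaf with unique neighbor u
      have honly := key b a huv.symm hr
      apply not_twoSC_of_dominating (u := v)
      intro x hx
      by_cases hgx : G.Adj v x
      · exact (newAdj G u v v x).mpr (Or.inl hgx)
      · have hxu : x = u := honly x ((G.compl_adj v x).mpr ⟨fun h => hx h.symm, hgx⟩)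
        subst hxu
        exact (newAdj G x v v x).mpr (Or.inr ⟨Or.inr ⟨rfl, rfl⟩, hne.symm⟩)
    · -- φ a is right: u is a leaf with unique neighbor v
      have honly := key a b huv hr
      apply not_twoSC_of_dominating (u := u)
      intro x hx
      by_cases hgx : G.Adj u x
      · exact (newAdj G u v u x).mpr (Or.inl hgx)
      · have hxv : x = v := honly x ((G.compl_adj u x).mpr ⟨fun h => hx h.symm, hgx⟩)
        subst hxv
        exact (newAdj G u x u x).mpr (Or.inr ⟨Or.inl ⟨rfl, rfl⟩, hne⟩)
end

section
/- The complete bipartite graph K_{k,ℓ} with k, ℓ ≥ 2 is an edge-minimal 2-self-centered graph. -/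
open SimpleGraph

variable {V : Type*}

section Aux

variable {k ℓ : ℕ}

private lemma kb_adj (a : Fin k) (b : Fin ℓ) :
    (completeBipartiteGraph (Fin k) (Fin ℓ)).Adj (Sum.inl a) (Sum.inr b) := by simp

private lemma kb_dist_le_two (hk : 1 ≤ k) (hl : 1 ≤ ℓ)
    (u v : Fin k ⊕ Fin ℓ) :
    (completeBipartiteGraph (Fin k) (Fin ℓ)).dist u v ≤ 2 := by
  set G := completeBipartiteGraph (Fin k) (Fin ℓ)
  rcases u with a | b <;> rcases v with a' | b'
  · exact le_trans (dist_le ((kb_adj a ⟨0, hl⟩).toWalk.append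
      ((kb_adj a' ⟨0, hl⟩).symm.toWalk))) (by simp)
  · exact le_trans (dist_le (kb_adj a b').toWalk) (by norm_num)
  · exact le_trans (dist_le (kb_adj a' b).symm.toWalk) (by norm_num)
  · exact le_trans (dist_le (((kb_adj ⟨0, hk⟩ b).symm.toWalk).append
      ((kb_adj ⟨0, hk⟩ b').toWalk))) (by simp)

private lemma kb_conn (hk : 1 ≤ k) (hl : 1 ≤ ℓ) :
    (completeBipartiteGraph (Fin k) (Fin ℓ)).Connected := by
  haveI : Nonempty (Fin k ⊕ Fin ℓ) := ⟨Sum.inl ⟨0, hk⟩⟩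
  refine ⟨fun u v => ?_⟩
  rcases u with a | b <;> rcases v with a' | b'
  · exact ((kb_adj a ⟨0, hl⟩).toWalk.append ((kb_adj a' ⟨0, hl⟩).symm.toWalk)).reachable
  · exact (kb_adj a b').toWalk.reachable
  · exact (kb_adj a' b).symm.toWalk.reachable
  · exact (((kb_adj ⟨0, hk⟩ b).symm.toWalk).append ((kb_adj ⟨0, hk⟩ b').toWalk)).reachable

private lemma kb_ecc (hk : 2 ≤ k) (hl : 2 ≤ ℓ) (v : Fin k ⊕ Fin ℓ) :
    ecc (completeBipartiteGraph (Fin k) (Fin ℓ)) v = 2 := by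
  set G := completeBipartiteGraph (Fin k) (Fin ℓ) with hG
  have hk1 : 1 ≤ k := by omega
  have hl1 : 1 ≤ ℓ := by omega
  have hub : ecc G v ≤ 2 :=
    Finset.sup_le fun u _ => kb_dist_le_two hk1 hl1 v u
  refine le_antisymm hub ?_
  -- find a vertex at distance exactly 2
  have hconn := kb_conn hk1 hl1
  obtain ⟨w, hw, hnadj⟩ : ∃ w, w ≠ v ∧ ¬ G.Adj v w := by
    rcases v with a | b
    · obtain ⟨a', ha'⟩ : ∃ a' : Fin k, a' ≠ a := by
        refine ⟨if a = ⟨0, hk1⟩ then ⟨1, by omega⟩ else ⟨0, hk1⟩, ?_⟩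
        split <;> simp_all [Fin.ext_iff] <;> omega
      exact ⟨Sum.inl a', by simpa using ha', by simp [hG]⟩
    · obtain ⟨b', hb'⟩ : ∃ b' : Fin ℓ, b' ≠ b := by
        refine ⟨if b = ⟨0, hl1⟩ then ⟨1, by omega⟩ else ⟨0, hl1⟩, ?_⟩
        split <;> simp_all [Fin.ext_iff] <;> omega
      exact ⟨Sum.inr b', by simpa using hb', by simp [hG]⟩
  have hd2 : 2 ≤ G.dist v w := by
    have hconn' : G.Connected := hconn
    have h0 : G.dist v w ≠ 0 := by
      intro h
      rw [hconn'.dist_eq_zero_iff] at h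
      exact hw h.symm
    have h1 : G.dist v w ≠ 1 := by
      intro h
      rw [dist_eq_one_iff_adj] at h
      exact hnadj h
    omega
  exact le_trans hd2 (Finset.le_sup (Finset.mem_univ w))

private lemma kb_twosc (hk : 2 ≤ k) (hl : 2 ≤ ℓ) :
    TwoSC (completeBipartiteGraph (Fin k) (Fin ℓ)) := by
  have hk1 : 1 ≤ k := by omega
  have hl1 : 1 ≤ ℓ := by omega
  refine ⟨kb_conn hk1 hl1, ?_, ?_⟩
  · refine le_antisymm (Finset.sup_le fun v _ => (kb_ecc hk hl v).le) ?_
    exact le_trans (kb_ecc hk hl (Sum.inl ⟨0, hk1⟩)).ge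
      (Finset.le_sup (Finset.mem_univ _))
  · have : (Set.range fun v => ecc (completeBipartiteGraph (Fin k) (Fin ℓ)) v) = {2} := by
      ext n
      simp only [Set.mem_range, Set.mem_singleton_iff]
      constructor
      · rintro ⟨v, rfl⟩; exact kb_ecc hk hl v
      · rintro rfl; exact ⟨Sum.inl ⟨0, by omega⟩, kb_ecc hk hl _⟩
    rw [grad, this, csInf_singleton]

private lemma kb_del (hk : 2 ≤ k) (hl : 2 ≤ ℓ) (a : Fin k) (b : Fin ℓ) :
    ¬ TwoSC ((completeBipartiteGraph (Fin k) (Fin ℓ)).deleteEdges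
      {s(Sum.inl a, Sum.inr b)}) := by
  set G := completeBipartiteGraph (Fin k) (Fin ℓ) with hG
  set G' := G.deleteEdges {s(Sum.inl a, Sum.inr b)} with hG'
  rintro ⟨hconn, hdiam, -⟩
  have hd3 : 3 ≤ G'.dist (Sum.inl a) (Sum.inr b) := by
    have h0 : G'.dist (Sum.inl a) (Sum.inr b) ≠ 0 := by
      intro h
      rw [hconn.dist_eq_zero_iff] at h
      simp at h
    have h1 : G'.dist (Sum.inl a) (Sum.inr b) ≠ 1 := by
      intro h
      rw [dist_eq_one_iff_adj, hG', deleteEdges_adj] at h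
      simp at h
    have h2 : G'.dist (Sum.inl a) (Sum.inr b) ≠ 2 := by
      intro h
      obtain ⟨p, hp⟩ := (hconn.preconnected (Sum.inl a) (Sum.inr b)).exists_walk_length_eq_dist
      rw [h] at hp
      cases p with
      | cons h' q =>
        rename_i x
        cases q with
        | nil => simp at hp
        | cons h'' q' =>
          cases q' with
          | nil =>
            rw [hG', deleteEdges_adj] at h' h''
            rcases x with c | d
            · simp [hG] at h'
            · simp [hG] at h''
          | cons _ _ => simp at hp
    omega
  have : 3 ≤ gdiam G' :=
    le_trans (le_trans hd3 (Finset.le_sup (Finset.mem_univ (Sum.inr b))))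
      (Finset.le_sup (f := fun v => ecc G' v) (Finset.mem_univ (Sum.inl a)))
  omega

end Aux

/-- The complete bipartite graph K_{k,ℓ} with k, ℓ ≥ 2 is an edge-minimal 2-self-centered
graph. -/
theorem stmt_7 (k ℓ : ℕ) (hk : 2 ≤ k) (hl : 2 ≤ ℓ) :
    TwoSC (completeBipartiteGraph (Fin k) (Fin ℓ)) ∧
      ∀ e ∈ (completeBipartiteGraph (Fin k) (Fin ℓ)).edgeSet,
        ¬ TwoSC ((completeBipartiteGraph (Fin k) (Fin ℓ)).deleteEdges {e}) := by
  refine ⟨kb_twosc hk hl, ?_⟩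
  intro e he
  induction e using Sym2.ind with
  | _ u v =>
    rw [mem_edgeSet] at he
    rcases u with a | b <;> rcases v with a' | b'
    · simp at he
    · exact kb_del hk hl a b'
    · rw [Sym2.eq_swap]
      exact kb_del hk hl a' b
    · simp at he
end

section
/- If G is an edge-minimal 2-self-centered graph that contains no critical vertices (that is, no vertex x is the unique common neighbor of some pair of non-adjacent vertices u, v), then G is triangle-free. -/
open SimpleGraph

variable {V : Type*}

private lemma walk_len2_aux {G : SimpleGraph V} {p q : V} (w : G.Walk p q)
    (h : w.length = 2) : ∃ m, G.Adj p m ∧ G.Adj m q := by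
  cases w with
  | nil => simp at h
  | cons h1 w' =>
    cases w' with
    | nil => simp at h
    | cons h2 w'' =>
      simp only [Walk.length_cons] at h
      have h0 : w''.length = 0 := by omega
      have he := Walk.eq_of_length_eq_zero h0
      subst he
      exact ⟨_, h1, h2⟩

/-- An edge-minimal 2-self-centered graph with no critical vertex for any pair of
non-adjacent vertices is triangle-free. -/
theorem stmt_8 [Fintype V] (G : SimpleGraph V)
    (h2sc : TwoSC G)
    (hmin : ∀ e ∈ G.edgeSet, ¬ TwoSC (G.deleteEdges {e}))
    (hnocrit : ∀ x u v : V, u ≠ v → ¬ G.Adj u v → G.Adj u x → G.Adj x v →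
      ∃ w : V, w ≠ x ∧ G.Adj u w ∧ G.Adj w v) :
    G.CliqueFree 3 := by
  classical
  intro s hs
  rw [is3Clique_iff] at hs
  obtain ⟨a, b, c, hab, hac, hbc, -⟩ := hs
  obtain ⟨hconn, hdiam, hrad⟩ := h2sc
  have hneV : Nonempty V := hconn.nonempty
  have hne : a ≠ b := hab.ne
  -- every vertex of G has eccentricity 2
  have hecc : ∀ v : V, ecc G v = 2 := by
    intro v
    have h1 : ecc G v ≤ 2 := hdiam ▸ Finset.le_sup (Finset.mem_univ v)
    have h2 : 2 ≤ ecc G v := hrad ▸ Nat.sInf_le ⟨v, rfl⟩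
    omega
  have hdle : ∀ u v : V, G.dist u v ≤ 2 := fun u v =>
    le_trans (Finset.le_sup (Finset.mem_univ v)) (le_of_eq (hecc u))
  set G' := G.deleteEdges {s(a, b)} with hG'
  have hG'le : G' ≤ G := G.deleteEdges_le _
  have hadj' : ∀ x y : V, G'.Adj x y ↔ G.Adj x y ∧ ¬(x = a ∧ y = b) ∧ ¬(x = b ∧ y = a) := by
    intro x y
    rw [hG', deleteEdges_adj]
    constructor
    · rintro ⟨h, hmem⟩
      refine ⟨h, ?_, ?_⟩ <;> rintro ⟨rfl, rfl⟩ <;> apply hmem <;>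
        simp [Sym2.eq_iff]
    · rintro ⟨h, h1, h2⟩
      refine ⟨h, ?_⟩
      simp only [Set.mem_singleton_iff, Sym2.eq_iff]
      tauto
  -- common neighbor in G' for non-adjacent pairs
  have hkey : ∀ p q : V, p ≠ q → ¬G.Adj p q → ∃ m, G'.Adj p m ∧ G'.Adj m q := by
    intro p q hpq hnadj
    have hr : G.Reachable p q := hconn p q
    have hd2 : G.dist p q = 2 := by
      have h0 : G.dist p q ≠ 0 := by
        rw [dist_ne_zero_iff_ne_and_reachable]; exact ⟨hpq, hr⟩
      have h1 : G.dist p q ≠ 1 := fun h => hnadj (dist_eq_one_iff_adj.mp h)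
      have := hdle p q
      omega
    obtain ⟨wlk, hwlk⟩ := hr.exists_walk_length_eq_dist
    rw [hd2] at hwlk
    obtain ⟨m, h1, h2⟩ := walk_len2_aux wlk hwlk
    -- h1 : G.Adj p m, h2 : G.Adj m q
    by_cases hpm : G'.Adj p m
    · by_cases hmq : G'.Adj m q
      · exact ⟨m, hpm, hmq⟩
      · -- edge m q is the edge a b
        have hor : (m = a ∧ q = b) ∨ (m = b ∧ q = a) := by
          have := (hadj' m q).not.mp hmq; tauto
        obtain ⟨w, hwm, hw1, hw2⟩ := hnocrit m p q hpq hnadj h1 h2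
        refine ⟨w, (hadj' p w).mpr ⟨hw1, ?_, ?_⟩, (hadj' w q).mpr ⟨hw2, ?_, ?_⟩⟩ <;>
        rintro ⟨h3, h4⟩ <;>
          rcases hor with ⟨h5, h6⟩ | ⟨h5, h6⟩ <;> subst_vars <;>
          first
            | exact hwm rfl
            | exact hpq rfl
            | exact h1.ne rfl
            | exact h2.ne rfl
            | exact hw1.ne rfl
            | exact hw2.ne rfl
            | exact hnadj hw2
            | exact hnadj hw1
            | exact hnadj h1
            | exact hnadj h2
    · -- edge p m is the edge a b
      have hor : (p = a ∧ m = b) ∨ (p = b ∧ m = a) := by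
        have := (hadj' p m).not.mp hpm; tauto
      obtain ⟨w, hwm, hw1, hw2⟩ := hnocrit m p q hpq hnadj h1 h2
      refine ⟨w, (hadj' p w).mpr ⟨hw1, ?_, ?_⟩, (hadj' w q).mpr ⟨hw2, ?_, ?_⟩⟩ <;>
        rintro ⟨h3, h4⟩ <;>
          rcases hor with ⟨h5, h6⟩ | ⟨h5, h6⟩ <;> subst_vars <;>
          first
            | exact hwm rfl
            | exact hpq rfl
            | exact h1.ne rfl
            | exact h2.ne rfl
            | exact hw1.ne rfl
            | exact hw2.ne rfl
            | exact hnadj hw2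
            | exact hnadj hw1
            | exact hnadj h1
            | exact hnadj h2
  -- every pair has a walk of length ≤ 2 in G'
  have hwalk : ∀ x y : V, ∃ w : G'.Walk x y, w.length ≤ 2 := by
    intro x y
    by_cases hxy : x = y
    · subst hxy; exact ⟨Walk.nil, by simp⟩
    by_cases hadjxy : G'.Adj x y
    · exact ⟨Walk.cons hadjxy Walk.nil, by simp⟩
    by_cases hGxy : G.Adj x y
    · -- the edge x y must be a b; use c as a midpoint
      have hor : (x = a ∧ y = b) ∨ (x = b ∧ y = a) := by
        have := (hadj' x y).not.mp hadjxy; tauto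
      obtain ⟨hxc, hyc⟩ : G.Adj x c ∧ G.Adj y c := by
        rcases hor with ⟨rfl, rfl⟩ | ⟨rfl, rfl⟩ <;>
          exact ⟨by assumption, by assumption⟩
      refine ⟨Walk.cons ((hadj' x c).mpr ⟨hxc, ?_, ?_⟩)
        (Walk.cons ((hadj' c y).mpr ⟨hyc.symm, ?_, ?_⟩) Walk.nil), by simp⟩ <;>
        rintro ⟨h3, h4⟩ <;>
        rcases hor with ⟨h5, h6⟩ | ⟨h5, h6⟩ <;> subst_vars <;>
        first | exact hyc.ne rfl | exact hxc.ne rfl | exact hne rfl | exact hxy rfl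
    · obtain ⟨m, h1, h2⟩ := hkey x y hxy hGxy
      exact ⟨Walk.cons h1 (Walk.cons h2 Walk.nil), by simp⟩
  have hconn' : G'.Connected := by
    rw [connected_iff]
    exact ⟨fun x y => ⟨(hwalk x y).choose⟩, hneV⟩
  have hdle' : ∀ x y : V, G'.dist x y ≤ 2 := by
    intro x y
    obtain ⟨w, hw⟩ := hwalk x y
    exact le_trans (dist_le w) hw
  have hecc' : ∀ v : V, ecc G' v = 2 := by
    intro v
    have h1 : ecc G' v ≤ 2 := Finset.sup_le fun u _ => hdle' v u
    obtain ⟨u, -, hu⟩ := Finset.exists_mem_eq_sup Finset.univ Finset.univ_nonempty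
      (fun u => G.dist v u)
    have hu2 : G.dist v u = 2 := by rw [← hu]; exact hecc v
    have hvu : v ≠ u := by rintro rfl; simp [SimpleGraph.dist_self] at hu2
    have hnadj : ¬G.Adj v u := fun h => by
      rw [dist_eq_one_iff_adj.mpr h] at hu2; omega
    have hd0 : G'.dist v u ≠ 0 := by
      rw [dist_ne_zero_iff_ne_and_reachable]; exact ⟨hvu, hconn' v u⟩
    have hd1 : G'.dist v u ≠ 1 := fun h =>
      hnadj (hG'le (dist_eq_one_iff_adj.mp h))
    have h2 : 2 ≤ ecc G' v := by
      refine le_trans ?_ (Finset.le_sup (f := fun u => G'.dist v u) (Finset.mem_univ u))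
      show 2 ≤ G'.dist v u
      have := hdle' v u
      omega
    omega
  have hgdiam' : gdiam G' = 2 := by
    unfold gdiam
    rw [Finset.sup_congr rfl fun v _ => hecc' v]
    exact Finset.sup_const Finset.univ_nonempty 2
  have hgrad' : grad G' = 2 := by
    unfold grad
    have : (fun v => ecc G' v) = fun _ : V => 2 := funext hecc'
    rw [this, Set.range_const, csInf_singleton]
  exact hmin s(a, b) (G.mem_edgeSet.mpr hab) ⟨hconn', hgdiam', hgrad'⟩
end

section
/- Every triangle-free 2-self-centered graph is edge-minimal 2-self-centered: removing any edge yields a graph that is not 2-self-centered. -/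
open SimpleGraph

variable {V : Type*}

/-- Every triangle-free 2-self-centered graph is edge-minimal. -/
theorem stmt_9 [Fintype V] (G : SimpleGraph V)
    (htf : G.CliqueFree 3) (h2sc : TwoSC G) :
    ∀ e ∈ G.edgeSet, ¬ TwoSC (G.deleteEdges {e}) := by
  classical
  intro e he hsc
  induction e using Sym2.ind with
  | _ a b =>
  rw [SimpleGraph.mem_edgeSet] at he
  set G' := G.deleteEdges {s(a,b)} with hG'
  obtain ⟨hconn, hdiam, -⟩ := hsc
  have hne : a ≠ b := he.ne
  have hd : G'.dist a b ≤ 2 := by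
    calc G'.dist a b ≤ ecc G' a := Finset.le_sup (Finset.mem_univ b)
    _ ≤ gdiam G' := Finset.le_sup (Finset.mem_univ a)
    _ = 2 := hdiam
  have hnadj : ¬ G'.Adj a b := by
    simp [hG', SimpleGraph.deleteEdges_adj]
  have hpos : 0 < G'.dist a b := (hconn a b).pos_dist_of_ne hne
  have hne1 : G'.dist a b ≠ 1 := fun h1 =>
    hnadj ((SimpleGraph.dist_eq_one_iff_adj).mp h1)
  have hd2 : G'.dist a b = 2 := by omega
  obtain ⟨p, hp⟩ := (hconn a b).exists_walk_length_eq_dist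
  rw [hd2] at hp
  cases p with
  | nil => simp at hp
  | cons h1 q =>
    cases q with
    | nil => simp at hp
    | cons h2 r =>
      cases r with
      | cons h3 s => simp [SimpleGraph.Walk.length_cons] at hp
      | nil =>
        have hle : G' ≤ G := SimpleGraph.deleteEdges_le _
        exact htf _ (SimpleGraph.is3Clique_triple_iff.mpr
          ⟨he, hle h1, (hle h2).symm⟩)
end

section
/- If G is a 2-self-centered graph containing a triangle on vertices u, v, w, then at most one of u, v, w has degree 2 in G. -/
open SimpleGraph

variable {V : Type*}

lemma nbr_char [Fintype V] [DecidableEq V] (G : SimpleGraph V) [DecidableRel G.Adj]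
    {u v w : V} (huv : G.Adj u v) (huw : G.Adj u w) (hvw : v ≠ w)
    (hu : G.degree u = 2) : ∀ y, G.Adj u y → y = v ∨ y = w := by
  have hsub : ({v, w} : Finset V) ⊆ G.neighborFinset u := by
    intro y hy
    simp only [Finset.mem_insert, Finset.mem_singleton] at hy
    rcases hy with rfl | rfl <;> simp [huv, huw]
  have hcard : ({v, w} : Finset V).card = 2 := Finset.card_pair hvw
  have heq : G.neighborFinset u = {v, w} := by
    refine (Finset.eq_of_subset_of_card_le hsub ?_).symm
    rw [hcard, ← hu, SimpleGraph.degree]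
  intro y hy
  have : y ∈ G.neighborFinset u := by simpa using hy
  rw [heq] at this
  simpa using this

lemma key_lemma [Fintype V] (G : SimpleGraph V) [DecidableRel G.Adj]
    (h2sc : TwoSC G) (u v w : V)
    (huv : G.Adj u v) (hvw : G.Adj v w) (huw : G.Adj u w)
    (hu : G.degree u = 2) (hv : G.degree v = 2) : False := by
  classical
  obtain ⟨hconn, hdiam, hrad⟩ := h2sc
  have hnu : ∀ y, G.Adj u y → y = v ∨ y = w :=
    nbr_char G huv huw hvw.ne hu
  have hnv : ∀ y, G.Adj v y → y = u ∨ y = w :=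
    nbr_char G huv.symm hvw huw.ne hv
  -- every vertex is within distance 1 of w
  have hdist : ∀ x : V, G.dist w x ≤ 1 := by
    intro x
    by_cases hxw : x = w
    · subst hxw; simp [SimpleGraph.dist_self]
    by_cases hxu : x = u
    · subst hxu
      exact (SimpleGraph.dist_eq_one_iff_adj.mpr huw.symm).le
    by_cases hxv : x = v
    · subst hxv
      exact (SimpleGraph.dist_eq_one_iff_adj.mpr hvw.symm).le
    -- x ∉ {u,v,w}; use dist u x ≤ 2
    have hle2 : G.dist u x ≤ 2 := by
      have h1 : G.dist u x ≤ ecc G u := Finset.le_sup (Finset.mem_univ x)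
      have h2 : ecc G u ≤ gdiam G := Finset.le_sup (Finset.mem_univ u)
      omega
    obtain ⟨p, hp⟩ := (hconn u x).exists_walk_length_eq_dist
    cases p with
    | nil => exact absurd rfl (Ne.symm hxu)
    | cons h q =>
      cases q with
      | nil =>
        rcases hnu _ h with rfl | rfl
        · exact absurd rfl hxv
        · exact absurd rfl hxw
      | cons h' r =>
        cases r with
        | cons h'' r' =>
          rw [← hp] at hle2
          simp [SimpleGraph.Walk.length_cons] at hle2
        | nil =>
          rcases hnu _ h with rfl | rfl
          · rcases hnv _ h' with rfl | rfl
            · exact absurd rfl hxu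
            · exact absurd rfl hxw
          · exact le_of_eq (SimpleGraph.dist_eq_one_iff_adj.mpr h')
  have h1 : ecc G w ≤ 1 := Finset.sup_le fun x _ => hdist x
  have h2 : grad G ≤ ecc G w := Nat.sInf_le ⟨w, rfl⟩
  omega

/-- In a 2-self-centered graph, at most one vertex of any triangle has degree 2. -/
theorem stmt_10 [Fintype V] (G : SimpleGraph V) [DecidableRel G.Adj]
    (h2sc : TwoSC G) (u v w : V)
    (huv : G.Adj u v) (hvw : G.Adj v w) (huw : G.Adj u w) :
    ¬ (G.degree u = 2 ∧ G.degree v = 2) ∧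
    ¬ (G.degree u = 2 ∧ G.degree w = 2) ∧
    ¬ (G.degree v = 2 ∧ G.degree w = 2) := by
  refine ⟨fun ⟨h1, h2⟩ => key_lemma G h2sc u v w huv hvw huw h1 h2,
          fun ⟨h1, h2⟩ => key_lemma G h2sc u w v huw hvw.symm huv h1 h2,
          fun ⟨h1, h2⟩ => key_lemma G h2sc v w u hvw huw.symm huv.symm h1 h2⟩
end

section
/- If G is a 2-self-centered graph with a triangle u, v, w in which deg(u) = deg(v) = 2, then G cannot be 2-self-centered; equivalently, no 2-self-centered graph contains a triangle with two vertices of degree 2. -/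
open SimpleGraph

variable {V : Type*}

/-- No 2-self-centered graph contains a triangle with two vertices of degree 2. -/
theorem stmt_11 [Fintype V] (G : SimpleGraph V) [DecidableRel G.Adj]
    (h2sc : TwoSC G) (u v w : V)
    (huv : G.Adj u v) (hvw : G.Adj v w) (huw : G.Adj u w)
    (hdu : G.degree u = 2) (hdv : G.degree v = 2) :
    False := by

  classical
  obtain ⟨hconn, hdiam, hrad⟩ := h2sc
  have hvw' : v ≠ w := G.ne_of_adj hvw
  have huw' : u ≠ w := G.ne_of_adj huw
  have huv' : u ≠ v := G.ne_of_adj huv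
  -- neighbor sets
  have hNu : G.neighborFinset u = {v, w} := by
    refine (Finset.eq_of_subset_of_card_le ?_ ?_).symm
    · intro x hx
      simp only [Finset.mem_insert, Finset.mem_singleton] at hx
      rcases hx with rfl | rfl
      · exact (G.mem_neighborFinset _ _).2 huv
      · exact (G.mem_neighborFinset _ _).2 huw
    · rw [← G.card_neighborFinset_eq_degree] at hdu
      rw [hdu, Finset.card_insert_of_notMem (by simpa using hvw'),
        Finset.card_singleton]
  have hNv : G.neighborFinset v = {u, w} := by
    refine (Finset.eq_of_subset_of_card_le ?_ ?_).symm
    · intro x hx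
      simp only [Finset.mem_insert, Finset.mem_singleton] at hx
      rcases hx with rfl | rfl
      · exact (G.mem_neighborFinset _ _).2 huv.symm
      · exact (G.mem_neighborFinset _ _).2 hvw
    · rw [← G.card_neighborFinset_eq_degree] at hdv
      rw [hdv, Finset.card_insert_of_notMem (by simpa using huw'),
        Finset.card_singleton]
  have hNu' : ∀ x, G.Adj u x → x = v ∨ x = w := by
    intro x hx
    have : x ∈ G.neighborFinset u := (G.mem_neighborFinset u x).2 hx
    rw [hNu] at this
    simpa using this
  have hNv' : ∀ x, G.Adj v x → x = u ∨ x = w := by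
    intro x hx
    have : x ∈ G.neighborFinset v := (G.mem_neighborFinset v x).2 hx
    rw [hNv] at this
    simpa using this
  -- every vertex is adjacent to w or equal to w
  have key : ∀ x, G.Adj w x ∨ x = w := by
    intro x
    have hdist : G.dist u x ≤ 2 := by
      calc G.dist u x ≤ ecc G u := Finset.le_sup (Finset.mem_univ x)
        _ ≤ gdiam G := Finset.le_sup (Finset.mem_univ u)
        _ = 2 := hdiam
    obtain ⟨p, hp⟩ := (hconn.preconnected u x).exists_walk_length_eq_dist
    have hlen : p.length ≤ 2 := by rw [hp]; exact hdist
    cases p with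
    | nil => exact Or.inl huw.symm
    | cons h q =>
      rename_i y
      cases q with
      | nil =>
        rcases hNu' x h with rfl | rfl
        · exact Or.inl hvw.symm
        · exact Or.inr rfl
      | cons h' q' =>
        cases q' with
        | nil =>
          rcases hNu' y h with rfl | rfl
          · rcases hNv' x h' with rfl | rfl
            · exact Or.inl huw.symm
            · exact Or.inr rfl
          · exact Or.inl h'
        | cons h'' q'' => simp [SimpleGraph.Walk.length_cons] at hlen
  -- hence ecc w ≤ 1
  have hecc : ecc G w ≤ 1 := by
    apply Finset.sup_le
    intro x _
    rcases key x with h | rfl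
    · exact le_of_eq (SimpleGraph.dist_eq_one_iff_adj.2 h)
    · simp [SimpleGraph.dist_self]
  have : grad G ≤ 1 := le_trans (Nat.sInf_le ⟨w, rfl⟩) hecc
  rw [hrad] at this
  omega
end

section
/- If G is a 2-self-centered graph that is not edge-minimal (some edge e can be removed keeping the graph 2-self-centered), then G contains a triangle. -/
open SimpleGraph

variable {V : Type*}

/-- A 2-self-centered graph that is not edge-minimal contains a triangle. -/
theorem stmt_12 [Fintype V] (G : SimpleGraph V)
    (h2sc : TwoSC G)
    (hnotmin : ∃ e ∈ G.edgeSet, TwoSC (G.deleteEdges {e})) :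
    ¬ G.CliqueFree 3 := by
  obtain ⟨e, he, hcon', hdiam', -⟩ := hnotmin
  induction e using Sym2.inductionOn with
  | hf a b =>
    rw [mem_edgeSet] at he
    set G' := G.deleteEdges {s(a,b)} with hG'
    have hnadj : ¬ G'.Adj a b := by
      simp [hG', deleteEdges_adj]
    have hne : a ≠ b := he.ne
    have hd2 : G'.dist a b ≤ 2 := by
      have h1 : ecc G' a ≤ 2 := hdiam' ▸ Finset.le_sup (Finset.mem_univ a)
      exact le_trans (Finset.le_sup (f := fun u => G'.dist a u) (Finset.mem_univ b)) h1
    have hreach : G'.Reachable a b := hcon'.preconnected a b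
    have hd0 : G'.dist a b ≠ 0 := fun h => hne (hreach.dist_eq_zero_iff.mp h)
    have hd1 : G'.dist a b ≠ 1 := fun h => hnadj (dist_eq_one_iff_adj.mp h)
    have hd : G'.dist a b = 2 := by omega
    obtain ⟨p, hp⟩ := hreach.exists_walk_length_eq_dist
    rw [hd] at hp
    match p, hp with
    | .cons (v := c) h1 (.cons h2 .nil), _ =>
      have hac : G.Adj a c := (deleteEdges_adj.mp h1).1
      have hcb : G.Adj c b := (deleteEdges_adj.mp h2).1
      classical
      intro hcf
      exact hcf {a, b, c} (is3Clique_triple_iff.mpr ⟨he, hac, hcb.symm⟩)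
end

section
/- Let H be the graph obtained from K_{3,3} by removing one edge yz and adding a new vertex x adjacent exactly to y and z. Then H is a triangle-free edge-minimal 2-self-centered graph in which x is the unique common neighbor of the non-adjacent vertices y and z. -/
open SimpleGraph

variable {V : Type*}

/-- The graph of Example 2: K_{3,3} with parts {0,1,2}, {3,4,5}, with the edge y z = 03
removed, and a new vertex x = 6 adjacent exactly to y = 0 and z = 3. -/
def exampleGraph2 : SimpleGraph (Fin 7) :=
  SimpleGraph.fromEdgeSet
    {s(0, 4), s(0, 5), s(1, 3), s(1, 4), s(1, 5), s(2, 3), s(2, 4), s(2, 5), s(6, 0), s(6, 3)}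

lemma adj_iff' (a b : Fin 7) : exampleGraph2.Adj a b ↔
    ((s(a,b) = s(0,4) ∨ s(a,b) = s(0,5) ∨ s(a,b) = s(1,3) ∨ s(a,b) = s(1,4) ∨
      s(a,b) = s(1,5) ∨ s(a,b) = s(2,3) ∨ s(a,b) = s(2,4) ∨ s(a,b) = s(2,5) ∨
      s(a,b) = s(6,0) ∨ s(a,b) = s(6,3)) ∧ a ≠ b) := by
  simp [exampleGraph2, Set.mem_insert_iff]

instance : DecidableRel exampleGraph2.Adj := fun a b =>
  decidable_of_iff _ (adj_iff' a b).symm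

instance (e : Sym2 (Fin 7)) : DecidableRel (exampleGraph2.deleteEdges {e}).Adj := fun a b =>
  decidable_of_iff (exampleGraph2.Adj a b ∧ ¬ s(a,b) = e) (by
    rw [SimpleGraph.deleteEdges_adj]; simp)

/-- key combinatorial fact -/
lemma key : ∀ a b : Fin 7, a = b ∨ exampleGraph2.Adj a b ∨
    ∃ c, exampleGraph2.Adj a c ∧ exampleGraph2.Adj c b := by decide

lemma walk_cases {G : SimpleGraph V} : ∀ {p q : V} (w : G.Walk p q), w.length ≤ 2 →
    p = q ∨ G.Adj p q ∨ ∃ c, G.Adj p c ∧ G.Adj c q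
  | _, _, .nil, _ => Or.inl rfl
  | _, _, .cons h .nil, _ => Or.inr (Or.inl h)
  | _, _, .cons h1 (.cons h2 .nil), _ => Or.inr (Or.inr ⟨_, h1, h2⟩)
  | _, _, .cons _ (.cons _ (.cons _ w)), h => by
      simp [SimpleGraph.Walk.length_cons] at h

lemma dist_le_two (a b : Fin 7) : exampleGraph2.dist a b ≤ 2 := by
  rcases key a b with rfl | h | ⟨c, h1, h2⟩
  · rw [SimpleGraph.dist_self]; omega
  · calc exampleGraph2.dist a b ≤ (SimpleGraph.Walk.cons h .nil).length :=
        SimpleGraph.dist_le _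
      _ ≤ 2 := by simp
  · calc exampleGraph2.dist a b ≤ (SimpleGraph.Walk.cons h1 (.cons h2 .nil)).length :=
        SimpleGraph.dist_le _
      _ ≤ 2 := by simp

lemma conn : exampleGraph2.Connected := by
  rw [SimpleGraph.connected_iff]
  refine ⟨fun a b => ?_, ⟨0⟩⟩
  rcases key a b with rfl | h | ⟨c, h1, h2⟩
  · exact SimpleGraph.Reachable.refl a
  · exact h.reachable
  · exact h1.reachable.trans h2.reachable

lemma nonadj_pair : ∀ v : Fin 7, ∃ u, v ≠ u ∧ ¬ exampleGraph2.Adj v u := by decide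

lemma ecc_eq (v : Fin 7) : ecc exampleGraph2 v = 2 := by
  apply le_antisymm
  · exact Finset.sup_le fun u _ => dist_le_two v u
  · obtain ⟨u, hne, hna⟩ := nonadj_pair v
    have h1 : exampleGraph2.dist v u ≠ 0 := by
      rw [SimpleGraph.dist_ne_zero_iff_ne_and_reachable]
      exact ⟨hne, conn.preconnected v u⟩
    have h2 : exampleGraph2.dist v u ≠ 1 := fun h =>
      hna (SimpleGraph.dist_eq_one_iff_adj.mp h)
    have h3 : exampleGraph2.dist v u ≤ Finset.univ.sup fun u => exampleGraph2.dist v u :=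
      Finset.le_sup (Finset.mem_univ u)
    rw [ecc]; omega

lemma gdiam_eq : gdiam exampleGraph2 = 2 := by
  rw [gdiam]
  apply le_antisymm
  · exact Finset.sup_le fun v _ => (ecc_eq v).le
  · exact (ecc_eq 0) ▸ Finset.le_sup (Finset.mem_univ (0 : Fin 7))

lemma grad_eq : grad exampleGraph2 = 2 := by
  rw [grad]
  have : (Set.range fun v => ecc exampleGraph2 v) = {2} := by
    ext n
    simp only [Set.mem_range, Set.mem_singleton_iff]
    constructor
    · rintro ⟨v, rfl⟩; exact ecc_eq v
    · rintro rfl; exact ⟨0, ecc_eq 0⟩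
  rw [this]; simp

lemma not_twoSC_of_far {p q : Fin 7} (e : Sym2 (Fin 7)) (hne : p ≠ q)
    (hna : ¬ (exampleGraph2.deleteEdges {e}).Adj p q)
    (hno : ∀ c, ¬ ((exampleGraph2.deleteEdges {e}).Adj p c ∧
      (exampleGraph2.deleteEdges {e}).Adj c q)) :
    ¬ TwoSC (exampleGraph2.deleteEdges {e}) := by
  rintro ⟨hc, hd, -⟩
  set G' := exampleGraph2.deleteEdges {e}
  have hreach : G'.Reachable p q := hc.preconnected p q
  have hdle : G'.dist p q ≤ 2 := by
    have h1 : G'.dist p q ≤ ecc G' p := Finset.le_sup (Finset.mem_univ q)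
    have h2 : ecc G' p ≤ gdiam G' := Finset.le_sup (Finset.mem_univ p)
    omega
  obtain ⟨w, hw⟩ := hreach.exists_walk_length_eq_dist
  rcases walk_cases w (by omega) with rfl | h | ⟨c, h1, h2⟩
  · exact hne rfl
  · exact hna h
  · exact hno c ⟨h1, h2⟩

lemma edge_min : ∀ e ∈ exampleGraph2.edgeSet, ¬ TwoSC (exampleGraph2.deleteEdges {e}) := by
  intro e he
  induction e using Sym2.ind with
  | _ a b =>
    rw [SimpleGraph.mem_edgeSet] at he
    have hkey : ∃ p q : Fin 7, p ≠ q ∧ ¬ (exampleGraph2.deleteEdges {s(a,b)}).Adj p q ∧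
        ∀ c, ¬ ((exampleGraph2.deleteEdges {s(a,b)}).Adj p c ∧
          (exampleGraph2.deleteEdges {s(a,b)}).Adj c q) := by
      revert he
      revert a b
      decide
    obtain ⟨p, q, h1, h2, h3⟩ := hkey
    exact not_twoSC_of_far s(a,b) h1 h2 h3


/-- The graph of Example 2 is a triangle-free edge-minimal 2-self-centered graph in which
the vertex x = 6 is the unique common neighbor of the non-adjacent vertices
y = 0 and z = 3. -/
theorem stmt_14 :
    exampleGraph2.CliqueFree 3 ∧
    TwoSC exampleGraph2 ∧
    (∀ e ∈ exampleGraph2.edgeSet, ¬ TwoSC (exampleGraph2.deleteEdges {e})) ∧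
    (¬ exampleGraph2.Adj 0 3 ∧ exampleGraph2.Adj 6 0 ∧ exampleGraph2.Adj 6 3 ∧
      ∀ x : Fin 7, exampleGraph2.Adj 0 x → exampleGraph2.Adj x 3 → x = 6) := by
  refine ⟨?_, ⟨conn, gdiam_eq, grad_eq⟩, edge_min, by decide, by decide, by decide, by decide⟩
  intro t ht
  obtain ⟨x, y, z, h1, h2, h3, rfl⟩ := SimpleGraph.is3Clique_iff.mp ht
  revert h1 h2 h3
  revert x y z
  decide
end

section
/- If G is a 2-self-centered graph with a triangle u, v, w such that deg(u) ≥ 3, deg(v) ≥ 3, and neither u is a critical vertex for any pair nor v is a critical vertex for any pair, then G − uv is also 2-self-centered. -/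
open SimpleGraph

variable {V : Type*}

/-- If G is 2-self-centered with a triangle u, v, w where deg(u), deg(v) ≥ 3 and neither u
nor v is a critical vertex for any pair, then G - uv is also 2-self-centered. -/
theorem stmt_15 [Fintype V] (G : SimpleGraph V) [DecidableRel G.Adj]
    (h2sc : TwoSC G) (u v w : V)
    (huv : G.Adj u v) (hvw : G.Adj v w) (huw : G.Adj u w)
    (hdu : 3 ≤ G.degree u) (hdv : 3 ≤ G.degree v)
    (hucrit : ∀ a b : V, a ≠ b → ¬ G.Adj a b → G.Adj a u → G.Adj u b →
      ∃ x : V, x ≠ u ∧ G.Adj a x ∧ G.Adj x b)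
    (hvcrit : ∀ a b : V, a ≠ b → ¬ G.Adj a b → G.Adj a v → G.Adj v b →
      ∃ x : V, x ≠ v ∧ G.Adj a x ∧ G.Adj x b) :
    TwoSC (G.deleteEdges {s(u, v)}) := by
  obtain ⟨hconn, hdiam, hrad⟩ := h2sc
  set H := G.deleteEdges {s(u, v)} with hHdef
  have huvne : u ≠ v := huv.ne
  have hHadj : ∀ {a b : V}, H.Adj a b ↔ G.Adj a b ∧ ¬(s(a, b) = s(u, v)) := by
    intro a b; simp [hHdef, deleteEdges_adj]
  have mkgen : ∀ {a x : V}, G.Adj a x → ¬(a = u ∧ x = v) → ¬(a = v ∧ x = u) → H.Adj a x := by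
    intro a x h h1 h2
    rw [hHadj]
    refine ⟨h, ?_⟩
    rw [Sym2.eq_iff]
    tauto
  have mk : ∀ {a x : V}, G.Adj a x → x ≠ u → x ≠ v → H.Adj a x := by
    intro a x h h1 h2
    exact mkgen h (fun hh => h2 hh.2) (fun hh => h1 hh.2)
  -- every pair in G is at distance at most 2
  have hdistG : ∀ a b : V, G.dist a b ≤ 2 := by
    intro a b
    calc G.dist a b ≤ ecc G a := Finset.le_sup (Finset.mem_univ b)
    _ ≤ gdiam G := Finset.le_sup (Finset.mem_univ a)
    _ = 2 := hdiam
  -- nonadjacent distinct vertices have a common neighbor in G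
  have hcommonG : ∀ a b : V, a ≠ b → ¬G.Adj a b → ∃ x, G.Adj a x ∧ G.Adj x b := by
    intro a b hne hnadj
    have hr : G.Reachable a b := hconn a b
    obtain ⟨p, hp⟩ := hr.exists_walk_length_eq_dist
    have h0 : G.dist a b ≠ 0 := by
      rw [dist_ne_zero_iff_ne_and_reachable]; exact ⟨hne, hr⟩
    have h1 : G.dist a b ≠ 1 := fun h => hnadj ((dist_eq_one_iff_adj).mp h)
    have h2 : G.dist a b = 2 := by have := hdistG a b; omega
    rw [h2] at hp
    cases p with
    | nil => simp at hp
    | cons h q =>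
      cases q with
      | nil => simp at hp
      | cons h' q' =>
        cases q' with
        | nil => exact ⟨_, h, h'⟩
        | cons h'' q'' => simp [SimpleGraph.Walk.length_cons] at hp
  -- key: nonadjacent distinct vertices have a common neighbor in H
  have key : ∀ a b : V, a ≠ b → ¬G.Adj a b → ∃ x, H.Adj a x ∧ H.Adj x b := by
    intro a b hne hnadj
    obtain ⟨x, hax, hxb⟩ := hcommonG a b hne hnadj
    by_cases hxu : x = u
    · rw [hxu] at hax hxb
      by_cases hav : a = v
      · obtain ⟨x', hx'u, hax', hx'b⟩ := hucrit a b hne hnadj hax hxb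
        have hx'v : x' ≠ v := fun h => by rw [hav, h] at hax'; exact G.irrefl hax'
        exact ⟨x', mk hax' hx'u hx'v, (mk hx'b.symm hx'u hx'v).symm⟩
      · by_cases hbv : b = v
        · obtain ⟨x', hx'u, hax', hx'b⟩ := hucrit a b hne hnadj hax hxb
          have hx'v : x' ≠ v := fun h => by rw [hbv] at hx'b; rw [h] at hx'b; exact G.irrefl hx'b
          exact ⟨x', mk hax' hx'u hx'v, (mk hx'b.symm hx'u hx'v).symm⟩
        · exact ⟨u, mkgen hax (fun hh => huvne hh.2) (fun hh => hav hh.1),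
            mkgen hxb (fun hh => hbv hh.2) (fun hh => huvne hh.1)⟩
    · by_cases hxv : x = v
      · rw [hxv] at hax hxb
        by_cases hau : a = u
        · obtain ⟨x', hx'v, hax', hx'b⟩ := hvcrit a b hne hnadj hax hxb
          have hx'u : x' ≠ u := fun h => by rw [hau, h] at hax'; exact G.irrefl hax'
          exact ⟨x', mk hax' hx'u hx'v, (mk hx'b.symm hx'u hx'v).symm⟩
        · by_cases hbu : b = u
          · obtain ⟨x', hx'v, hax', hx'b⟩ := hvcrit a b hne hnadj hax hxb
            have hx'u : x' ≠ u := fun h => by rw [hbu] at hx'b; rw [h] at hx'b; exact G.irrefl hx'b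
            exact ⟨x', mk hax' hx'u hx'v, (mk hx'b.symm hx'u hx'v).symm⟩
          · exact ⟨v, mkgen hax (fun hh => hau hh.1) (fun hh => huvne hh.2.symm),
              mkgen hxb (fun hh => huvne hh.1.symm) (fun hh => hbu hh.2)⟩
      · exact ⟨x, mk hax hxu hxv, (mk hxb.symm hxu hxv).symm⟩
  -- every pair in H is reachable with distance at most 2
  have hHdist2 : ∀ a b : V, H.Reachable a b ∧ H.dist a b ≤ 2 := by
    intro a b
    by_cases hab : a = b
    · subst hab; refine ⟨Reachable.refl a, ?_⟩; rw [SimpleGraph.dist_self]; omega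
    · by_cases hH1 : H.Adj a b
      · exact ⟨hH1.reachable, le_trans (dist_le hH1.toWalk) (by simp)⟩
      · have step : ∀ x : V, H.Adj a x → H.Adj x b → H.Reachable a b ∧ H.dist a b ≤ 2 := by
          intro x h1 h2
          let p : H.Walk a b := Walk.cons h1 (Walk.cons h2 Walk.nil)
          have hpl : p.length = 2 := by simp [p]
          exact ⟨⟨p⟩, le_trans (dist_le p) (le_of_eq hpl)⟩
        by_cases hG : G.Adj a b
        · have heq : s(a, b) = s(u, v) := by
            by_contra hne
            exact hH1 (hHadj.mpr ⟨hG, hne⟩)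
          have hwu : w ≠ u := fun h => by subst h; exact G.irrefl huw
          have hwv : w ≠ v := fun h => by subst h; exact G.irrefl hvw
          rw [Sym2.eq_iff] at heq
          rcases heq with ⟨rfl, rfl⟩ | ⟨rfl, rfl⟩
          · exact step w (mk huw hwu hwv) (mk hvw hwu hwv).symm
          · exact step w (mk hvw hwu hwv) (mk huw hwu hwv).symm
        · obtain ⟨x, h1, h2⟩ := key a b hab hG
          exact step x h1 h2
  have hHconn : H.Connected := by
    rw [connected_iff]
    exact ⟨fun a b => (hHdist2 a b).1, hconn.nonempty⟩
  -- every eccentricity in H equals 2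
  have heccH : ∀ x : V, ecc H x = 2 := by
    intro x
    have hle : ecc H x ≤ 2 := Finset.sup_le fun b _ => (hHdist2 x b).2
    have hge : 2 ≤ ecc G x := hrad ▸ Nat.sInf_le ⟨x, rfl⟩
    rw [ecc, Finset.le_sup_iff (by norm_num : (⊥ : ℕ) < 2)] at hge
    obtain ⟨y, -, hy⟩ := hge
    have hxy : x ≠ y := by rintro rfl; rw [SimpleGraph.dist_self] at hy; omega
    have hnadj : ¬G.Adj x y := fun h => by
      rw [← dist_eq_one_iff_adj] at h; omega
    have hnH : ¬H.Adj x y := fun h => hnadj (hHadj.mp h).1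
    have h0 : H.dist x y ≠ 0 := by
      rw [dist_ne_zero_iff_ne_and_reachable]; exact ⟨hxy, (hHdist2 x y).1⟩
    have h1 : H.dist x y ≠ 1 := fun h => hnH ((dist_eq_one_iff_adj).mp h)
    have : 2 ≤ H.dist x y := by omega
    have hle2 : H.dist x y ≤ ecc H x := Finset.le_sup (Finset.mem_univ y)
    omega
  obtain ⟨x0⟩ := hconn.nonempty
  refine ⟨hHconn, ?_, ?_⟩
  · refine le_antisymm (Finset.sup_le fun x _ => le_of_eq (heccH x)) ?_
    calc (2 : ℕ) = ecc H x0 := (heccH x0).symm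
    _ ≤ gdiam H := Finset.le_sup (Finset.mem_univ x0)
  · have hr : (Set.range fun x => ecc H x) = {2} := by
      ext n
      simp only [Set.mem_range, Set.mem_singleton_iff]
      constructor
      · rintro ⟨x, rfl⟩; exact heccH x
      · rintro rfl; exact ⟨x0, heccH x0⟩
    rw [grad, hr, csInf_singleton]
end

section
/- If G is a triangle-free 2-self-centered graph, Y' is a maximal independent set of G, and Z' is a maximal independent set of G − Y', and a ∈ Z' is a vertex with no neighbor outside Y' ∪ Z', then a is adjacent to every vertex of Y'. -/
open SimpleGraph

variable {V : Type*}

/-- An independent set of a graph. -/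
def IsIndep (G : SimpleGraph V) (S : Set V) : Prop :=
  S.Pairwise fun x y => ¬ G.Adj x y

/-- In a triangle-free 2-self-centered graph with Y' a maximal independent set, Z' a maximal
independent set of G - Y', any a ∈ Z' with no neighbor outside Y' ∪ Z' is adjacent to
every vertex of Y'. -/
theorem stmt_17 [Fintype V] (G : SimpleGraph V)
    (h2sc : TwoSC G) (htf : G.CliqueFree 3)
    (Y' Z' : Set V)
    (hYind : IsIndep G Y')
    (hYmax : ∀ S : Set V, IsIndep G S → Y' ⊆ S → S = Y')
    (hZsub : Z' ⊆ Y'ᶜ) (hZind : IsIndep G Z')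
    (hZmax : ∀ S : Set V, S ⊆ Y'ᶜ → IsIndep G S → Z' ⊆ S → S = Z')
    (a : V) (ha : a ∈ Z')
    (hquiet : ∀ x : V, G.Adj a x → x ∈ Y' ∪ Z') :
    ∀ y ∈ Y', G.Adj a y := by
  intro y hy
  by_contra hadj
  have hne : a ≠ y := fun h => hZsub ha (h ▸ hy)
  have hreach : G.Reachable a y := h2sc.1.preconnected a y
  have hdle : G.dist a y ≤ 2 := by
    have h1 : G.dist a y ≤ ecc G a := Finset.le_sup (Finset.mem_univ y)
    have h2 : ecc G a ≤ gdiam G := Finset.le_sup (Finset.mem_univ a)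
    exact h1.trans (h2sc.2.1 ▸ h2)
  have hd0 : G.dist a y ≠ 0 := by
    simp [SimpleGraph.dist_eq_zero_iff_eq_or_not_reachable, hne, hreach]
  have hd1 : G.dist a y ≠ 1 := by
    intro h
    exact hadj ((G.dist_eq_one_iff_adj).mp h)
  have hd2 : G.dist a y = 2 := by omega
  obtain ⟨p, hp⟩ := hreach.exists_walk_length_eq_dist
  rw [hd2] at hp
  match p, hp with
  | .cons (v := w) h1 (.cons h2 .nil), _ =>
    rcases hquiet w h1 with hw | hw
    · exact hYind hw hy (G.ne_of_adj h2) h2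
    · exact hZind ha hw (G.ne_of_adj h1) h1
end

section
/- Let G be a graph constructed as in Definition GCB from a triangle-free graph X with independent sets A_1,...,A_r, B_1,...,B_s: vertex classes K, L, Y = {y_1,...,y_r}, Z = {z_1,...,z_s}, V(X), with K complete to L ∪ Y, L complete to K ∪ Z, y_i adjacent to A_i, z_j adjacent to B_j, and y_i ~ z_j iff A_i ∩ B_j = ∅, with no other edges besides those of X. Then G is triangle-free. -/
open SimpleGraph

variable {K L VX : Type*} {r s : ℕ}

/-- Vertex set of the generalized complete bipartite graph: K ∪ L ∪ Y ∪ Z ∪ V(X),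
with Y = {y_1, ..., y_r} and Z = {z_1, ..., z_s}. -/
abbrev GCBVert (K L VX : Type*) (r s : ℕ) : Type _ := K ⊕ L ⊕ Fin r ⊕ Fin s ⊕ VX

/-- The vertex y_i. -/
def yV (K L VX : Type*) (s : ℕ) {r : ℕ} (i : Fin r) : GCBVert K L VX r s :=
  Sum.inr (Sum.inr (Sum.inl i))

/-- The vertex z_j. -/
def zV (K L VX : Type*) (r : ℕ) {s : ℕ} (j : Fin s) : GCBVert K L VX r s :=
  Sum.inr (Sum.inr (Sum.inr (Sum.inl j)))

/-- The vertex of G corresponding to a vertex x of X. -/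
def xV (K L : Type*) (r s : ℕ) {VX : Type*} (x : VX) : GCBVert K L VX r s :=
  Sum.inr (Sum.inr (Sum.inr (Sum.inr x)))

/-- One-directional edge relation of GCB_X(k, ℓ, A, B): K is complete to L ∪ Y, L is
complete to K ∪ Z, y_i is adjacent to A_i, z_j is adjacent to B_j, y_i ~ z_j iff
A_i ∩ B_j = ∅, and X keeps its own edges; there are no other edges. -/
def gcbRel (X : SimpleGraph VX) (A : Fin r → Set VX) (B : Fin s → Set VX) :
    GCBVert K L VX r s → GCBVert K L VX r s → Prop
  | Sum.inl _, Sum.inr (Sum.inl _) => True                                  -- K–L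
  | Sum.inl _, Sum.inr (Sum.inr (Sum.inl _)) => True                        -- K–Y
  | Sum.inr (Sum.inl _), Sum.inr (Sum.inr (Sum.inr (Sum.inl _))) => True    -- L–Z
  | Sum.inr (Sum.inr (Sum.inl i)), Sum.inr (Sum.inr (Sum.inr (Sum.inr x))) => x ∈ A i  -- y_i–A_i
  | Sum.inr (Sum.inr (Sum.inr (Sum.inl j))), Sum.inr (Sum.inr (Sum.inr (Sum.inr x))) => x ∈ B j  -- z_j–B_j
  | Sum.inr (Sum.inr (Sum.inl i)), Sum.inr (Sum.inr (Sum.inr (Sum.inl j))) => A i ∩ B j = ∅  -- y_i–z_j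
  | Sum.inr (Sum.inr (Sum.inr (Sum.inr x))), Sum.inr (Sum.inr (Sum.inr (Sum.inr x'))) => X.Adj x x'  -- X
  | _, _ => False

/-- The generalized complete bipartite graph GCB_X(k, ℓ, A, B). -/
def GCB (X : SimpleGraph VX) (A : Fin r → Set VX) (B : Fin s → Set VX)
    (K L : Type*) : SimpleGraph (GCBVert K L VX r s) :=
  SimpleGraph.fromRel (gcbRel X A B)

/-- Any generalized complete bipartite graph built from a triangle-free graph X and
independent sets A_1, ..., A_r, B_1, ..., B_s is triangle-free. -/
theorem stmt_19 (X : SimpleGraph VX) (A : Fin r → Set VX) (B : Fin s → Set VX)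
    (K L : Type*)
    (htf : X.CliqueFree 3)
    (hAind : ∀ i, (A i).Pairwise fun x y => ¬ X.Adj x y)
    (hBind : ∀ j, (B j).Pairwise fun x y => ¬ X.Adj x y) :
    (GCB X A B K L).CliqueFree 3 := by
  classical
  have h3 : ∀ a b c : VX, X.Adj a b → X.Adj a c → X.Adj b c → False := by
    intro a b c hab hac hbc
    exact htf {a, b, c} (is3Clique_triple_iff.mpr ⟨hab, hac, hbc⟩)
  have hA3 : ∀ i (x y : VX), x ∈ A i → y ∈ A i → X.Adj x y → False := by
    intro i x y hx hy hadj
    rcases eq_or_ne x y with rfl | hne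
    · exact X.loopless.irrefl _ hadj
    · exact hAind i hx hy hne hadj
  have hB3 : ∀ j (x y : VX), x ∈ B j → y ∈ B j → X.Adj x y → False := by
    intro j x y hx hy hadj
    rcases eq_or_ne x y with rfl | hne
    · exact X.loopless.irrefl _ hadj
    · exact hBind j hx hy hne hadj
  have hYZ : ∀ i j (x : VX), A i ∩ B j = ∅ → x ∈ A i → x ∈ B j → False := by
    intro i j x h hx hy
    exact Set.eq_empty_iff_forall_notMem.mp h x ⟨hx, hy⟩
  intro t ht
  rw [is3Clique_iff] at ht
  obtain ⟨a, b, c, hab, hac, hbc, -⟩ := ht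
  simp only [GCB, fromRel_adj] at hab hac hbc
  obtain ⟨hab1, hab2⟩ := hab
  obtain ⟨hac1, hac2⟩ := hac
  obtain ⟨hbc1, hbc2⟩ := hbc
  rcases a with k|l|i|j|x <;> rcases b with k'|l'|i'|j'|x' <;> rcases c with k''|l''|i''|j''|x'' <;>
    simp only [gcbRel, or_false, false_or, or_self] at hab2 hac2 hbc2 <;>
    (try casesm* _ ∨ _) <;>
    solve_by_elim [h3, hA3, hB3, hYZ, X.symm]
end
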